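/- Let A be an abelian group, G a group, and φ₁, …, φ_k : G → A homomorphisms (k ≥ 2). If R(φ₁, …, φ_k) < ∞, then R(φ₁, φ_j) < ∞ for every j = 2, …, k, and the product R(φ₁, φ₂)·R(φ₁, φ₃)⋯R(φ₁, φ_k) divides R(φ₁, …, φ_k). -/

import Mathlib

/-- The twisted conjugacy relation on `H` determined by a pair of homomorphisms. -/
def tcRel {G H : Type*} [Group G] [Group H] (φ ψ : G →* H) (α β : H) : Prop :=
  ∃ z : G, β = φ z * α * (ψ z)⁻¹

/-- The Reidemeister set `𝓡(φ, ψ)` of a pair of homomorphisms. -/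
def ReidSet₂ {G H : Type*} [Group G] [Group H] (φ ψ : G →* H) : Type _ :=
  Quot (tcRel φ ψ)

/-- The relation on `(k-1)`-tuples (`k = m+1`) defining the Reidemeister classes of a family
`φ₁, …, φ_k : G → H`. -/
def mRel {G H : Type*} [Group G] [Group H] {m : ℕ} (φ : Fin (m + 1) → (G →* H))
    (α β : Fin m → H) : Prop :=
  ∃ z : G, ∀ i : Fin m, β i = φ 0 z * α i * (φ i.succ z)⁻¹

/-- The Reidemeister set `𝓡(φ₁,…,φ_k)` of a family of homomorphisms. -/
def ReidSetM {G H : Type*} [Group G] [Group H] {m : ℕ} (φ : Fin (m + 1) → (G →* H)) :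
    Type _ :=
  Quot (mRel φ)

section Aux
variable {G A : Type*} [Group G] [CommGroup A]

/-- `z ↦ φ z * (ψ z)⁻¹`. -/
def rnDelta (φ ψ : G →* A) : G →* A := φ * ψ⁻¹

def reidSet₂_equiv (φ ψ : G →* A) :
    ReidSet₂ φ ψ ≃ A ⧸ (rnDelta φ ψ).range := by
  refine Quot.congrRight fun a b => ?_
  rw [QuotientGroup.leftRel_apply]
  constructor
  · rintro ⟨z, rfl⟩
    exact ⟨z, by simp [rnDelta, mul_comm, mul_assoc, mul_left_comm]⟩
  · rintro ⟨z, hz⟩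
    refine ⟨z, ?_⟩
    have : b = a * (φ z * (ψ z)⁻¹) := by
      rw [show φ z * (ψ z)⁻¹ = rnDelta φ ψ z from rfl, hz]; group
    rw [this]; simp [mul_comm, mul_assoc, mul_left_comm]

variable {m : ℕ} (φ : Fin (m + 1) → (G →* A))

/-- The diagonal homomorphism `z ↦ (δ_i z)_i`. -/
def rnDiag : G →* (Fin m → A) where
  toFun z i := rnDelta (φ 0) (φ i.succ) z
  map_one' := by funext i; simp
  map_mul' x y := by funext i; simp [mul_comm, mul_assoc, mul_left_comm]

def reidSetM_equiv :
    ReidSetM φ ≃ (Fin m → A) ⧸ (rnDiag φ).range := by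
  refine Quot.congrRight fun a b => ?_
  rw [QuotientGroup.leftRel_apply]
  constructor
  · rintro ⟨z, hz⟩
    refine ⟨z, ?_⟩
    funext i
    simp [rnDiag, rnDelta, hz i, mul_comm, mul_assoc, mul_left_comm]
  · rintro ⟨z, hz⟩
    refine ⟨z, fun i => ?_⟩
    have h2 : (a i)⁻¹ * b i = φ 0 z * (φ i.succ z)⁻¹ := by
      have := congrFun hz i
      simp only [rnDiag, rnDelta, MonoidHom.coe_mk, OneHom.coe_mk, Pi.mul_apply,
        Pi.inv_apply, MonoidHom.mul_apply, MonoidHom.inv_apply] at this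
      exact this.symm
    have : b i = a i * (φ 0 z * (φ i.succ z)⁻¹) := by rw [← h2]; group
    rw [this]; simp [mul_comm, mul_assoc, mul_left_comm]

end Aux

/-- Let `A` be an abelian group, `G` a group and `φ₁,…,φ_k : G → A` homomorphisms
(`k = m+1 ≥ 2`).  If `R(φ₁,…,φ_k) < ∞` then `R(φ₁,φ_j) < ∞` for every `j = 2,…,k`, and the
product `R(φ₁,φ₂)⋯R(φ₁,φ_k)` divides `R(φ₁,…,φ_k)`. -/
theorem prod_dvd_reidemeister_number_of_abelian {G A : Type*} [Group G] [CommGroup A]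
    {m : ℕ} (hm : 1 ≤ m) (φ : Fin (m + 1) → (G →* A))
    (hfin : ENat.card (ReidSetM φ) < ⊤) :
    (∀ i : Fin m, ENat.card (ReidSet₂ (φ 0) (φ i.succ)) < ⊤) ∧
    (∏ i : Fin m, Nat.card (ReidSet₂ (φ 0) (φ i.succ))) ∣ Nat.card (ReidSetM φ) := by
  haveI hFinM : Finite (ReidSetM φ) := by
    by_contra h
    rw [not_finite_iff_infinite] at h
    rw [ENat.card_eq_top_of_infinite] at hfin
    exact lt_irrefl _ hfin
  -- surjections onto each ReidSet₂
  have hsurj : ∀ i : Fin m, Function.Surjective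
      (Quot.map (fun α : Fin m → A => α i)
        (fun a b ⟨z, hz⟩ => ⟨z, hz i⟩) : ReidSetM φ → ReidSet₂ (φ 0) (φ i.succ)) := by
    intro i q
    induction q using Quot.ind with
    | _ a => exact ⟨Quot.mk _ (fun _ => a), rfl⟩
  have hFin₂ : ∀ i : Fin m, Finite (ReidSet₂ (φ 0) (φ i.succ)) :=
    fun i => @Finite.of_surjective _ _ hFinM _ (hsurj i)
  refine ⟨fun i => ?_, ?_⟩
  · haveI := hFin₂ i
    rw [ENat.card_eq_coe_natCard (ReidSet₂ (φ 0) (φ i.succ))]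
    exact ENat.coe_lt_top _
  -- divisibility
  set S : Fin m → Subgroup A := fun i => (rnDelta (φ 0) (φ i.succ)).range with hS
  set D : Subgroup (Fin m → A) := (rnDiag φ).range with hD
  set K : Subgroup (Fin m → A) := Subgroup.pi Set.univ S with hK
  have hDK : D ≤ K := by
    rintro x ⟨z, rfl⟩ i _
    exact ⟨z, rfl⟩
  have eM := reidSetM_equiv φ
  have hFinQD : Finite ((Fin m → A) ⧸ D) := Finite.of_equiv _ eM
  -- X ⧸ K ≃ ∀ i, A ⧸ S i
  let f : (Fin m → A) →* (∀ i, A ⧸ S i) :=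
    { toFun := fun x i => QuotientGroup.mk (x i)
      map_one' := rfl
      map_mul' := fun a b => rfl }
  have hfsurj : Function.Surjective f := by
    intro q
    exact ⟨fun i => (q i).out, funext fun i => QuotientGroup.out_eq' (q i)⟩
  have hker : f.ker = K := by
    ext x
    simp [f, MonoidHom.mem_ker, funext_iff, QuotientGroup.eq_one_iff, Subgroup.mem_pi, K]
    exact forall_congr' fun i => QuotientGroup.eq_one_iff (x i)
  have eK : ((Fin m → A) ⧸ K) ≃ (∀ i, A ⧸ S i) := by
    rw [← hker]
    exact (QuotientGroup.quotientKerEquivOfSurjective f hfsurj).toEquiv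
  -- quotient tower
  have eT := (QuotientGroup.quotientQuotientEquivQuotient D K hDK).toEquiv
  have h1 : Nat.card ((Fin m → A) ⧸ K) ∣ Nat.card ((Fin m → A) ⧸ D) := by
    rw [← Nat.card_congr eT]
    exact Subgroup.card_quotient_dvd_card _
  calc (∏ i : Fin m, Nat.card (ReidSet₂ (φ 0) (φ i.succ)))
      = ∏ i : Fin m, Nat.card (A ⧸ S i) := by
        exact Finset.prod_congr rfl fun i _ => Nat.card_congr (reidSet₂_equiv _ _)
    _ = Nat.card (∀ i, A ⧸ S i) := Nat.card_pi.symm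
    _ = Nat.card ((Fin m → A) ⧸ K) := (Nat.card_congr eK).symm
    _ ∣ Nat.card ((Fin m → A) ⧸ D) := h1
    _ = Nat.card (ReidSetM φ) := (Nat.card_congr eM).symm
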